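/- (Lemma 1, decreasing case.) Suppose Ψ_s < Ψ_w and A_s ≤ C_w. Then P = A_s maximizes the per-cell sum rate over the feasible interval: for every P with A_s ≤ P ≤ C_w, R_s(P) + R_w(P) ≤ R_s(A_s) + R_w(A_s). -/
import Mathlib


/-- Lemma 1, decreasing case: if `Ψ_s < Ψ_w` and `A_s ≤ C_w`,
then `P = A_s` maximizes `R_s(P) + R_w(P)` over `[A_s, C_w]`. -/
theorem stmt_3 (B p Ψs Ψw Rth : ℝ) (hB : 0 < B) (hp : 0 < p)
    (hΨs : 0 < Ψs) (hΨw : 0 < Ψw) (hRth : 0 ≤ Rth) (h : Ψs < Ψw)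
    (As Cw : ℝ)
    (hAs : As = max 0 (((2 : ℝ) ^ (2 * Rth / B) - 1) / Ψs))
    (hCw : Cw = min (p / 2) ((1 + Ψw * p) / (Ψw * (2 : ℝ) ^ (2 * Rth / B)) - 1 / Ψw))
    (hfeas : As ≤ Cw) :
    ∀ P : ℝ, As ≤ P → P ≤ Cw →
      (B / 2 * Real.logb 2 (1 + Ψs * P) +
        B / 2 * Real.logb 2 (1 + Ψw * (p - P) / (1 + Ψw * P))) ≤
      (B / 2 * Real.logb 2 (1 + Ψs * As) +
        B / 2 * Real.logb 2 (1 + Ψw * (p - As) / (1 + Ψw * As))) := by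
  intro P h1 h2
  have hAs0 : 0 ≤ As := by rw [hAs]; exact le_max_left _ _
  have hP0 : 0 ≤ P := hAs0.trans h1
  have hwp : (0:ℝ) < 1 + Ψw * p := by nlinarith
  have hsP : (0:ℝ) < 1 + Ψs * P := by nlinarith
  have hwP : (0:ℝ) < 1 + Ψw * P := by nlinarith
  have hsA : (0:ℝ) < 1 + Ψs * As := by nlinarith
  have hwA : (0:ℝ) < 1 + Ψw * As := by nlinarith
  have key : ∀ x : ℝ, (0:ℝ) < 1 + Ψw * x →
      1 + Ψw * (p - x) / (1 + Ψw * x) = (1 + Ψw * p) / (1 + Ψw * x) := by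
    intro x hx
    field_simp
    ring
  rw [key P hwP, key As hwA, ← mul_add, ← mul_add]
  have hB2 : (0:ℝ) ≤ B / 2 := by linarith
  apply mul_le_mul_of_nonneg_left _ hB2
  have hdP : (0:ℝ) < (1 + Ψw * p) / (1 + Ψw * P) := div_pos hwp hwP
  have hdA : (0:ℝ) < (1 + Ψw * p) / (1 + Ψw * As) := div_pos hwp hwA
  rw [← Real.logb_mul hsP.ne' hdP.ne', ← Real.logb_mul hsA.ne' hdA.ne']
  apply Real.logb_le_logb_of_le (by norm_num) (by positivity)
  rw [← mul_div_assoc, ← mul_div_assoc, div_le_div_iff₀ hwP hwA]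
  nlinarith [mul_nonneg (mul_nonneg (sub_nonneg.2 h.le) (sub_nonneg.2 h1)) hwp.le]
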